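/- For every y > 0, 2 Σ_{n≥1} (2n²y² − 1) e^{−n²y²} + (4π^{5/2}/y³) Σ_{n≥1} n² e^{−n²π²/y²} = 1. -/

import Mathlib

set_option maxHeartbeats 1000000
open Complex Real

noncomputable def thetaDeriv (τ : ℂ) : ℂ := ∑' n : ℤ, (π : ℂ) * I * n ^ 2 * jacobiTheta₂_term n 0 τ

lemma hasSum_thetaDeriv {τ : ℂ} (hτ : 0 < τ.im) :
    HasSum (fun n : ℤ => (π : ℂ) * I * n ^ 2 * jacobiTheta₂_term n 0 τ)
      ((jacobiTheta₂_fderiv 0 τ) (0, 1)) := by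
  let eval_snd_CLM : (ℂ × ℂ →L[ℂ] ℂ) →L[ℂ] ℂ :=
  { toFun := fun f ↦ f (0, 1)
    cont := continuous_id'.clm_apply continuous_const
    map_add' := by simp only [ContinuousLinearMap.add_apply, forall_const]
    map_smul' := by simp only [ContinuousLinearMap.coe_smul', Pi.smul_apply, smul_eq_mul,
      RingHom.id_apply, forall_const] }
  have step1 : HasSum (fun n ↦ (jacobiTheta₂_term_fderiv n 0 τ) (0, 1))
      ((jacobiTheta₂_fderiv 0 τ) (0, 1)) := by
    apply eval_snd_CLM.hasSum (hasSum_jacobiTheta₂_term_fderiv 0 hτ)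
  have step2 (n : ℤ) : (jacobiTheta₂_term_fderiv n 0 τ) (0, 1)
      = (π : ℂ) * I * n ^ 2 * jacobiTheta₂_term n 0 τ := by
    simp only [jacobiTheta₂_term_fderiv, smul_add, ContinuousLinearMap.add_apply,
      ContinuousLinearMap.coe_smul', ContinuousLinearMap.coe_fst', Pi.smul_apply, smul_eq_mul,
      mul_one, ContinuousLinearMap.coe_snd', mul_zero, zero_add, jacobiTheta₂_term,
      mul_comm _ (cexp _)]
  rwa [funext step2] at step1

lemma hasDerivAt_theta_snd {τ : ℂ} (hτ : 0 < τ.im) :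
    HasDerivAt (jacobiTheta₂ 0) (thetaDeriv τ) τ := by
  have step3 : HasDerivAt (fun x ↦ jacobiTheta₂ 0 x) ((jacobiTheta₂_fderiv 0 τ) (0, 1)) τ := by
    exact ((hasFDerivAt_jacobiTheta₂ 0 hτ).comp τ (hasFDerivAt_prodMk_right 0 τ)).hasDerivAt
  rwa [← (hasSum_thetaDeriv hτ).tsum_eq] at step3

lemma theta_eq_aux (τ : ℂ) : jacobiTheta₂ 0 τ
    = (-I * τ) ^ (-(1 / 2) : ℂ) * jacobiTheta₂ 0 (-1 / τ) := by
  have := jacobiTheta₂_functional_equation 0 τ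
  rw [cpow_neg, ← one_div]
  simpa using this

lemma thetaDeriv_eq {τ : ℂ} (hτ : 0 < τ.im) :
    thetaDeriv τ = (-(1 / 2) : ℂ) * (-I * τ) ^ (-(1 / 2 : ℂ) - 1) * (-I) * jacobiTheta₂ 0 (-1 / τ)
      + (-I * τ) ^ (-(1 / 2) : ℂ) * (thetaDeriv (-1 / τ) * (τ ^ 2)⁻¹) := by
  have hτ0 : τ ≠ 0 := fun h => by simp [h] at hτ
  have hτ' : 0 < (-1 / τ).im := by
    rw [div_eq_mul_inv, neg_one_mul, neg_im, inv_im, neg_div, neg_neg]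
    exact div_pos hτ (normSq_pos.mpr hτ0)
  have h1 : HasDerivAt (fun τ : ℂ => (-I * τ) ^ (-(1 / 2) : ℂ))
      ((-(1 / 2) : ℂ) * (-I * τ) ^ (-(1 / 2 : ℂ) - 1) * (-I)) τ := by
    have hlin := (hasDerivAt_id τ).const_mul (-I)
    simp only [mul_one] at hlin
    exact hlin.cpow_const (Or.inl (by simpa using hτ))
  have hinner : HasDerivAt (fun x : ℂ => -1 / x) ((τ ^ 2)⁻¹) τ := by
    simpa [neg_div, one_div, Pi.neg_def] using (hasDerivAt_inv hτ0).neg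
  have h2 : HasDerivAt (fun x : ℂ => jacobiTheta₂ 0 (-1 / x))
      (thetaDeriv (-1 / τ) * (τ ^ 2)⁻¹) τ := by
    simpa [Function.comp_def] using (hasDerivAt_theta_snd hτ').comp τ hinner
  have hG := h1.mul h2
  have hF : HasDerivAt (fun τ : ℂ => (-I * τ) ^ (-(1 / 2) : ℂ) * jacobiTheta₂ 0 (-1 / τ))
      (thetaDeriv τ) τ := by
    have := hasDerivAt_theta_snd hτ
    rwa [funext theta_eq_aux] at this
  exact hF.unique hG

/-- ℕ-indexed sums (matching the goal's shape). -/
noncomputable def S2 (c : ℝ) : ℝ := ∑' n : ℕ, ((n : ℝ) + 1) ^ 2 * rexp (-(((n : ℝ) + 1) ^ 2 * c))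
noncomputable def S0 (c : ℝ) : ℝ := ∑' n : ℕ, rexp (-(((n : ℝ) + 1) ^ 2 * c))

lemma summable_sq_exp {c : ℝ} (hc : 0 < c) :
    Summable (fun n : ℕ => (n : ℝ) ^ 2 * rexp (-((n : ℝ) ^ 2 * c))) := by
  have hr : ‖rexp (-c)‖ < 1 := by
    rw [Real.norm_eq_abs, abs_of_pos (Real.exp_pos _)]
    exact Real.exp_lt_one_iff.mpr (by linarith)
  have h := summable_pow_mul_geometric_of_norm_lt_one 2 hr (R := ℝ)
  refine h.of_nonneg_of_le (fun n => by positivity) (fun n => ?_)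
  have h1 : rexp (-((n : ℝ) ^ 2 * c)) ≤ rexp (-c) ^ n := by
    rw [← Real.exp_nat_mul]
    apply Real.exp_le_exp.mpr
    have : (n : ℝ) ≤ (n : ℝ) ^ 2 := by
      exact_mod_cast Nat.le_self_pow two_ne_zero n
    nlinarith
  calc (n : ℝ) ^ 2 * rexp (-((n : ℝ) ^ 2 * c)) ≤ (n : ℝ) ^ 2 * rexp (-c) ^ n := by
        apply mul_le_mul_of_nonneg_left h1 (by positivity)
    _ = (n : ℝ) ^ 2 * rexp (-c) ^ n := rfl

lemma summable_S2 {c : ℝ} (hc : 0 < c) :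
    Summable (fun n : ℕ => ((n : ℝ) + 1) ^ 2 * rexp (-(((n : ℝ) + 1) ^ 2 * c))) := by
  have := (summable_nat_add_iff (f := fun n : ℕ => (n : ℝ) ^ 2 * rexp (-((n : ℝ) ^ 2 * c))) 1).mpr
    (summable_sq_exp hc)
  simpa [mul_comm] using this

lemma summable_S0 {c : ℝ} (hc : 0 < c) :
    Summable (fun n : ℕ => rexp (-(((n : ℝ) + 1) ^ 2 * c))) := by
  refine (summable_S2 hc).of_nonneg_of_le (fun n => (Real.exp_pos _).le) (fun n => ?_)
  have h1 : (1 : ℝ) ≤ ((n : ℝ) + 1) ^ 2 := by nlinarith [(Nat.cast_nonneg n : (0:ℝ) ≤ (n:ℝ))]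
  have h1 : (1 : ℝ) ≤ ((n : ℝ) + 1) ^ 2 := by
    nlinarith [(Nat.cast_nonneg n : (0:ℝ) ≤ (n:ℝ))]
  nlinarith [Real.exp_pos (-(((n : ℝ) + 1) ^ 2 * c))]

lemma hasSum_int_sq {c : ℝ} (hc : 0 < c) :
    HasSum (fun n : ℤ => (n : ℝ) ^ 2 * rexp (-((n : ℝ) ^ 2 * c))) (2 * S2 c) := by
  have hS : HasSum (fun n : ℕ => ((n : ℝ) + 1) ^ 2 * rexp (-(((n : ℝ) + 1) ^ 2 * c))) (S2 c) :=
    (summable_S2 hc).hasSum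
  rw [two_mul]
  refine HasSum.of_nat_of_neg_add_one (f := fun n : ℤ => (n : ℝ) ^ 2 * rexp (-((n : ℝ) ^ 2 * c)))
    ?_ ?_
  · refine (hasSum_nat_add_iff' (g := S2 c)
      (f := fun n : ℕ => (n : ℝ) ^ 2 * rexp (-((n : ℝ) ^ 2 * c))) 1).mp ?_
    convert hS using 1
    · rfl
    · funext n; push_cast; ring_nf
    · simp
  · convert hS using 1
    funext n
    push_cast
    ring_nf

lemma hasSum_int_exp {c : ℝ} (hc : 0 < c) :
    HasSum (fun n : ℤ => rexp (-((n : ℝ) ^ 2 * c))) (1 + 2 * S0 c) := by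
  have hS : HasSum (fun n : ℕ => rexp (-(((n : ℝ) + 1) ^ 2 * c))) (S0 c) :=
    (summable_S0 hc).hasSum
  have h : (1 : ℝ) + 2 * S0 c = (1 + S0 c) + S0 c := by ring
  rw [h]
  refine HasSum.of_nat_of_neg_add_one (f := fun n : ℤ => rexp (-((n : ℝ) ^ 2 * c))) ?_ ?_
  · refine (hasSum_nat_add_iff' (g := 1 + S0 c)
      (f := fun n : ℕ => rexp (-((n : ℝ) ^ 2 * c))) 1).mp ?_
    convert hS using 1
    · rfl
    · funext n; push_cast; ring_nf
    · simp
  · convert hS using 1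
    funext n
    push_cast
    ring_nf

lemma term_eval (t : ℝ) (n : ℤ) :
    jacobiTheta₂_term n 0 ((t : ℂ) * I) = ((rexp (-((n : ℝ) ^ 2 * (π * t))) : ℝ) : ℂ) := by
  rw [jacobiTheta₂_term, ofReal_exp]
  congr 1
  push_cast
  ring_nf
  rw [I_sq]
  ring

lemma theta_eval (t : ℝ) (ht : 0 < t) :
    jacobiTheta₂ 0 ((t : ℂ) * I) = (((1 : ℝ) + 2 * S0 (π * t) : ℝ) : ℂ) := by
  rw [jacobiTheta₂]
  have h2 := Complex.ofRealCLM.hasSum (hasSum_int_exp (mul_pos Real.pi_pos ht))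
  simp only [Complex.ofRealCLM_apply] at h2
  rw [tsum_congr (term_eval t)]
  exact_mod_cast h2.tsum_eq

lemma thetaDeriv_eval (t : ℝ) (ht : 0 < t) :
    thetaDeriv ((t : ℂ) * I) = (π : ℂ) * I * ((2 * S2 (π * t) : ℝ) : ℂ) := by
  rw [thetaDeriv]
  have h := Complex.ofRealCLM.hasSum (hasSum_int_sq (mul_pos Real.pi_pos ht))
  have h2 := h.mul_left ((π : ℂ) * I)
  simp only [Complex.ofRealCLM_apply] at h2
  rw [← h2.tsum_eq]
  refine tsum_congr fun n => ?_
  rw [term_eval]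
  push_cast
  ring

lemma hneg_aux (t : ℝ) (ht : 0 < t) : -1 / ((t : ℂ) * I) = ((t⁻¹ : ℝ) : ℂ) * I := by
  have ht0 : (t : ℂ) ≠ 0 := ofReal_ne_zero.mpr ht.ne'
  rw [div_eq_iff (by simp [ht0, I_ne_zero])]
  push_cast
  field_simp
  rw [I_sq]

lemma hbase_aux (t : ℝ) : -I * ((t : ℂ) * I) = (t : ℂ) := by
  rw [mul_comm ((t:ℂ)) I, ← mul_assoc, neg_mul, I_mul_I]
  ring

lemma real_fe (t : ℝ) (ht : 0 < t) :
    1 + 2 * S0 (π * t) = t ^ (-(1/2) : ℝ) * (1 + 2 * S0 (π * t⁻¹)) := by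
  have h := theta_eq_aux ((t : ℂ) * I)
  rw [hneg_aux t ht, theta_eval t ht, theta_eval t⁻¹ (inv_pos.mpr ht), hbase_aux t] at h
  rw [show (-(1/2) : ℂ) = ((-(1/2) : ℝ) : ℂ) by norm_num, ← Complex.ofReal_cpow ht.le] at h
  exact_mod_cast h

lemma real_key (t : ℝ) (ht : 0 < t) :
    π * (2 * S2 (π * t)) = 1 / 2 * t ^ (-(3/2) : ℝ) * (1 + 2 * S0 (π * t⁻¹))
      - π * t ^ (-(1/2) : ℝ) * (2 * S2 (π * t⁻¹)) * (t ^ 2)⁻¹ := by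
  have him : 0 < ((t : ℂ) * I).im := by simpa using ht
  have key := thetaDeriv_eq him
  rw [hneg_aux t ht, thetaDeriv_eval t ht, thetaDeriv_eval t⁻¹ (inv_pos.mpr ht),
    theta_eval t⁻¹ (inv_pos.mpr ht), hbase_aux t] at key
  rw [show (-(1/2) : ℂ) = ((-(1/2) : ℝ) : ℂ) by norm_num] at key
  rw [show (((-(1/2) : ℝ) : ℂ) - 1) = ((-(3/2) : ℝ) : ℂ) by push_cast; norm_num] at key
  rw [← Complex.ofReal_cpow ht.le, ← Complex.ofReal_cpow ht.le] at key
  have hsq : ((((t : ℂ)) * I) ^ 2)⁻¹ = -((((t ^ 2)⁻¹ : ℝ)) : ℂ) := by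
    rw [mul_pow, I_sq]
    push_cast
    field_simp
  rw [hsq] at key
  have him2 := congrArg Complex.im key
  simp only [Complex.mul_im, Complex.mul_re, Complex.ofReal_re, Complex.ofReal_im, Complex.I_re,
    Complex.I_im, Complex.add_im, Complex.add_re, Complex.neg_im, Complex.neg_re,
    Complex.ofReal_neg, mul_zero, zero_mul, mul_one, one_mul, zero_add, add_zero, neg_zero,
    zero_sub, sub_zero, neg_neg, Complex.re_ofNat, Complex.im_ofNat, Complex.div_im,
    Complex.div_re, Complex.one_re, Complex.one_im] at him2
  ring_nf at him2 ⊢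
  linarith

/-- Jacobi-type identity for the height of the Brownian tree: for `y > 0`,
`2 Σ_{n≥1} (2n²y² - 1) e^{-n²y²} + (4π^{5/2}/y³) Σ_{n≥1} n² e^{-n²π²/y²} = 1`. -/
theorem height_tail_plus_cdf_eq_one (y : ℝ) (hy : 0 < y) :
    2 * (∑' n : ℕ, (2 * ((n : ℝ) + 1) ^ 2 * y ^ 2 - 1) *
          Real.exp (-(((n : ℝ) + 1) ^ 2 * y ^ 2)))
      + (4 * Real.pi ^ 2 * Real.sqrt Real.pi / y ^ 3) *
          ∑' n : ℕ, ((n : ℝ) + 1) ^ 2 *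
            Real.exp (-(((n : ℝ) + 1) ^ 2 * Real.pi ^ 2 / y ^ 2)) = 1 := by
  have hy2 : 0 < y ^ 2 := by positivity
  have hpi := Real.pi_pos
  have ht : 0 < y ^ 2 / π := by positivity
  -- rewrite the two goal sums
  have hsum1 : (∑' n : ℕ, (2 * ((n : ℝ) + 1) ^ 2 * y ^ 2 - 1) *
      Real.exp (-(((n : ℝ) + 1) ^ 2 * y ^ 2)))
      = 2 * y ^ 2 * S2 (y ^ 2) - S0 (y ^ 2) := by
    have hA : Summable (fun n : ℕ => 2 * y ^ 2 *
        (((n : ℝ) + 1) ^ 2 * rexp (-(((n : ℝ) + 1) ^ 2 * y ^ 2)))) :=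
      (summable_S2 hy2).mul_left _
    have hB := summable_S0 hy2
    have hfe : (fun n : ℕ => (2 * ((n : ℝ) + 1) ^ 2 * y ^ 2 - 1) *
        Real.exp (-(((n : ℝ) + 1) ^ 2 * y ^ 2)))
        = fun n : ℕ => 2 * y ^ 2 * (((n : ℝ) + 1) ^ 2 * rexp (-(((n : ℝ) + 1) ^ 2 * y ^ 2)))
          - rexp (-(((n : ℝ) + 1) ^ 2 * y ^ 2)) := by
      funext n; ring
    rw [hfe, Summable.tsum_sub hA hB, tsum_mul_left]
    rfl
  have hsum2 : (∑' n : ℕ, ((n : ℝ) + 1) ^ 2 *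
      Real.exp (-(((n : ℝ) + 1) ^ 2 * Real.pi ^ 2 / y ^ 2)))
      = S2 (π ^ 2 / y ^ 2) := by
    refine tsum_congr fun n => ?_
    rw [mul_div_assoc]
  rw [hsum1, hsum2]
  -- the two key identities, with t = y²/π
  have hK := real_key (y ^ 2 / π) ht
  have hF := real_fe (y ^ 2 / π) ht
  have e1 : π * (y ^ 2 / π) = y ^ 2 := by field_simp
  have e2 : π * (y ^ 2 / π)⁻¹ = π ^ 2 / y ^ 2 := by
    rw [inv_div]; field_simp
  have e3 : (y ^ 2 / π) ^ (-(1/2) : ℝ) = Real.sqrt π / y := by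
    rw [Real.rpow_neg ht.le, ← Real.sqrt_eq_rpow, Real.sqrt_div (sq_nonneg y) π,
      Real.sqrt_sq hy.le, inv_div]
  have e4 : (y ^ 2 / π) ^ (-(3/2) : ℝ) = π * Real.sqrt π / y ^ 3 := by
    have h32 : (-(3/2) : ℝ) = (-(1/2)) + (-1) := by norm_num
    rw [h32, Real.rpow_add ht, e3, Real.rpow_neg_one, inv_div]
    field_simp
  have e5 : (((y ^ 2 / π) : ℝ) ^ 2)⁻¹ = π ^ 2 / y ^ 4 := by
    rw [div_pow, inv_div]
    ring
  rw [e1, e2, e3, e4, e5] at hK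
  rw [e1, e2, e3] at hF
  have hs : 0 < Real.sqrt π := Real.sqrt_pos.mpr hpi
  have hsq : Real.sqrt π * Real.sqrt π = π := Real.mul_self_sqrt hpi.le
  field_simp at hK hF ⊢
  have hpy : (π * y ^ 3) ≠ 0 := by positivity
  apply mul_left_cancel₀ hpy
  linear_combination (π * y ^ 3) * (hK - y ^ 2 * hF)
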